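/- arXiv:0909.2403 — 2 statements merged into one kernel-verified Lean document; each statement's English description precedes it below -/
import Mathlib

section
/- Let G be a finite simple graph on vertex set {1,…,n}, let 0 < ε < 1, let e be an edge of the complete graph K_n, and let G' be the ε-sparsification of G. Then E[Z_e(G')²] ≤ ε⁵·Z_e(G)² + ε³·Z_e(G). -/
open MeasureTheory ProbabilityTheory Real Filter

namespace RandomTriangles

/-- A graph on vertex set `Fin n`, given by edge indicators on unordered pairs
(values on diagonal pairs are never consulted). -/
abbrev Graph (n : ℕ) := Sym2 (Fin n) → Bool

/-- The edge set of the complete graph `K_n`: all non-diagonal unordered pairs. -/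
noncomputable def edges (n : ℕ) : Finset (Sym2 (Fin n)) :=
  Finset.univ.filter fun e => ¬ e.IsDiag

/-- The unordered pairs `e, f, g` form the three edges of a triangle. -/
def IsTriangleEdges {n : ℕ} (e f g : Sym2 (Fin n)) : Prop :=
  ∃ u v w : Fin n, u ≠ v ∧ v ≠ w ∧ u ≠ w ∧ e = s(u, v) ∧ f = s(v, w) ∧ g = s(u, w)

/-- `X G` is the number of triangles (3-cliques) of `G`. -/
noncomputable def X {n : ℕ} (G : Graph n) : ℕ :=
  Nat.card {T : Finset (Fin n) // T.card = 3 ∧ ∀ u ∈ T, ∀ v ∈ T, u ≠ v → G s(u, v) = true}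

/-- `Y G e` is the number of (unordered) sets `{f, g}` of edges of `G` such that
`{e, f, g}` is a triangle. -/
noncomputable def Y {n : ℕ} (G : Graph n) (e : Sym2 (Fin n)) : ℕ :=
  Nat.card {P : Sym2 (Sym2 (Fin n)) //
    ∃ f g, P = s(f, g) ∧ G f = true ∧ G g = true ∧ IsTriangleEdges e f g}

/-- `Z G e = Y G e` if `e` is an edge of `G`, and `0` otherwise. -/
noncomputable def Z {n : ℕ} (G : Graph n) (e : Sym2 (Fin n)) : ℕ :=
  if G e = true then Y G e else 0

/-- The Bernoulli measure with parameter `p` on `Bool`. -/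
noncomputable def bern (p : ℝ) : Measure Bool :=
  ENNReal.ofReal p • Measure.dirac true + ENNReal.ofReal (1 - p) • Measure.dirac false

/-- The product of independent Bernoulli(`p`) coin flips, one for each unordered pair
of vertices.  Under this measure, the identity map `ω ↦ ω` is the random graph `G(n,p)`,
and `ω ↦ sparsify G ω` is the `p`-sparsification of `G`. -/
noncomputable def edgeMeasure (n : ℕ) (p : ℝ) : Measure (Sym2 (Fin n) → Bool) :=
  Measure.pi fun _ => bern p

/-- The sparsification of `G` determined by the retention choices `ω`. -/
def sparsify {n : ℕ} (G : Graph n) (ω : Sym2 (Fin n) → Bool) : Graph n :=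
  fun e => G e && ω e

/-- `G` with the edge `e` removed. -/
def removeEdge {n : ℕ} (G : Graph n) (e : Sym2 (Fin n)) : Graph n :=
  fun f => if f = e then false else G f

open scoped Classical in
/-- The unordered pairs `{f, g}` of edges of `G` forming a triangle together with `e`. -/
noncomputable def trianglePairs {n : ℕ} (G : Graph n) (e : Sym2 (Fin n)) :
    Finset (Sym2 (Sym2 (Fin n))) :=
  Finset.univ.filter fun P => ∃ f g, P = s(f, g) ∧ G f = true ∧ G g = true ∧
    IsTriangleEdges e f g

/-- `pairCost h` sends the unordered pair `{f, g}` to `2 * h f + 2 * h g + 2`. -/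
noncomputable def pairCost {n : ℕ} (h : Sym2 (Fin n) → ℝ) : Sym2 (Sym2 (Fin n)) → ℝ :=
  Sym2.lift ⟨fun f g => 2 * h f + 2 * h g + 2, fun f g => by ring⟩

/-! ### Auxiliary lemmas -/

lemma bern_univ' {p : ℝ} (h0 : 0 ≤ p) (h1 : p ≤ 1) : bern p Set.univ = 1 := by
  simp [bern, ← ENNReal.ofReal_add h0 (by linarith : (0:ℝ) ≤ 1 - p)]

lemma bern_true' (p : ℝ) : bern p {true} = ENNReal.ofReal p := by
  simp [bern, Measure.dirac_apply]

lemma isProb_bern {p : ℝ} (h0 : 0 ≤ p) (h1 : p ≤ 1) : IsProbabilityMeasure (bern p) :=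
  ⟨bern_univ' h0 h1⟩

open scoped Classical in
/-- Indicator that all edges in `S` are retained by `ω`. -/
noncomputable def indS {n : ℕ} (ω : Sym2 (Fin n) → Bool) (S : Finset (Sym2 (Fin n))) : ℝ :=
  if ∀ f ∈ S, ω f = true then 1 else 0

lemma indS_mul {n : ℕ} (ω : Sym2 (Fin n) → Bool) (S S' : Finset (Sym2 (Fin n))) :
    indS ω S * indS ω S' = indS ω (S ∪ S') := by
  classical
  unfold indS
  split_ifs <;> simp_all [Finset.mem_union, or_imp, forall_and]

lemma integral_indS (n : ℕ) {ε : ℝ} (h0 : 0 ≤ ε) (h1 : ε ≤ 1) (S : Finset (Sym2 (Fin n))) :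
    ∫ ω, indS ω S ∂(edgeMeasure n ε) = ε ^ S.card := by
  classical
  haveI : IsProbabilityMeasure (bern ε) := isProb_bern h0 h1
  set A : Set (Sym2 (Fin n) → Bool) := {ω | ∀ f ∈ S, ω f = true} with hA
  have hfun : (fun ω : Sym2 (Fin n) → Bool => indS ω S)
      = A.indicator (1 : (Sym2 (Fin n) → Bool) → ℝ) := by
    ext ω
    simp only [indS, Set.indicator_apply, hA, Set.mem_setOf_eq, Pi.one_apply]
  have hAmeas : MeasurableSet A := (Set.toFinite A).measurableSet
  rw [hfun]
  rw [integral_indicator_one hAmeas]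
  have hApi : A = Set.univ.pi (fun i => if i ∈ S then {true} else Set.univ) := by
    ext ω
    simp only [hA, Set.mem_setOf_eq, Set.mem_pi, Set.mem_univ, forall_true_left]
    constructor
    · intro h i
      by_cases hi : i ∈ S <;> simp [hi, h i]
    · intro h i hi
      have := h i
      simp [hi] at this
      exact this
  rw [hApi, edgeMeasure, measureReal_def, Measure.pi_pi]
  have : ∀ i : Sym2 (Fin n), bern ε (if i ∈ S then {true} else Set.univ)
      = if i ∈ S then ENNReal.ofReal ε else 1 := by
    intro i
    by_cases hi : i ∈ S
    · simp [hi, bern_true']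
    · simp only [hi, if_false]; exact bern_univ' h0 h1
  simp_rw [this]
  rw [Finset.prod_ite_mem, Finset.univ_inter, Finset.prod_const]
  rw [ENNReal.toReal_pow, ENNReal.toReal_ofReal h0]

lemma Y_eq_card {n : ℕ} (G : Graph n) (e : Sym2 (Fin n)) :
    Y G e = (trianglePairs G e).card := by
  classical
  rw [Y, Nat.card_eq_fintype_card, Fintype.card_subtype, trianglePairs]

/-- The finset of the (at most two) elements of an unordered pair. -/
noncomputable def sfin {n : ℕ} : Sym2 (Sym2 (Fin n)) → Finset (Sym2 (Fin n)) :=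
  Sym2.lift ⟨fun a b => {a, b}, fun a b => by
    classical
    exact Finset.pair_comm a b⟩

lemma mem_sfin {n : ℕ} {x : Sym2 (Fin n)} {P : Sym2 (Sym2 (Fin n))} :
    x ∈ sfin P ↔ x ∈ P := by
  classical
  induction P using Sym2.ind with
  | _ a b => simp [sfin, Sym2.mem_iff]

lemma trianglePairs_sparsify {n : ℕ} (G : Graph n) (ω : Sym2 (Fin n) → Bool)
    (e : Sym2 (Fin n)) :
    trianglePairs (sparsify G ω) e
      = (trianglePairs G e).filter (fun P => ∀ f ∈ P, ω f = true) := by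
  classical
  ext P
  simp only [trianglePairs, Finset.mem_filter, Finset.mem_univ, true_and, sparsify,
    Bool.and_eq_true]
  constructor
  · rintro ⟨f, g, rfl, ⟨hGf, hωf⟩, ⟨hGg, hωg⟩, htri⟩
    refine ⟨⟨f, g, rfl, hGf, hGg, htri⟩, ?_⟩
    intro x hx
    rw [Sym2.mem_iff] at hx
    rcases hx with rfl | rfl <;> assumption
  · rintro ⟨⟨f, g, rfl, hGf, hGg, htri⟩, hall⟩
    exact ⟨f, g, rfl, ⟨hGf, hall f (Sym2.mem_mk_left f g)⟩,
      ⟨hGg, hall g (Sym2.mem_mk_right f g)⟩, htri⟩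

lemma rep {n : ℕ} {G : Graph n} {e : Sym2 (Fin n)} {P : Sym2 (Sym2 (Fin n))}
    (hP : P ∈ trianglePairs G e) {u v : Fin n} (heuv : e = s(u, v)) :
    ∃ w, w ≠ u ∧ w ≠ v ∧ P = s(s(v, w), s(u, w)) := by
  classical
  simp only [trianglePairs, Finset.mem_filter, Finset.mem_univ, true_and] at hP
  obtain ⟨f, g, rfl, -, -, u₀, v₀, w₀, huv₀, hvw₀, huw₀, he₀, rfl, rfl⟩ := hP
  rw [heuv, Sym2.eq_iff] at he₀
  rcases he₀ with ⟨rfl, rfl⟩ | ⟨rfl, rfl⟩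
  · exact ⟨w₀, fun h => huw₀ h.symm, fun h => hvw₀ h.symm, rfl⟩
  · exact ⟨w₀, fun h => hvw₀ h.symm, fun h => huw₀ h.symm, Sym2.eq_swap⟩

lemma card_key {n : ℕ} {G : Graph n} {e : Sym2 (Fin n)} {P Q : Sym2 (Sym2 (Fin n))}
    (hP : P ∈ trianglePairs G e) (hQ : Q ∈ trianglePairs G e) :
    ({e} ∪ sfin P ∪ sfin Q).card = if P = Q then 3 else 5 := by
  classical
  have hP' := hP
  simp only [trianglePairs, Finset.mem_filter, Finset.mem_univ, true_and] at hP'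
  obtain ⟨f, g, -, -, -, u, v, w₀, huv, -, -, heuv, -, -⟩ := hP'
  obtain ⟨w, hwu, hwv, rfl⟩ := rep hP heuv
  obtain ⟨w', hw'u, hw'v, rfl⟩ := rep hQ heuv
  subst heuv
  have hPQ : (s(s(v, w), s(u, w)) = s(s(v, w'), s(u, w'))) ↔ w = w' := by
    simp only [Sym2.eq_iff]
    constructor
    · rintro (⟨h1, h2⟩ | ⟨h1, h2⟩) <;> rcases h1 with ⟨h3,h4⟩|⟨h3,h4⟩ <;> tauto
    · rintro rfl; tauto
  have hsf : sfin s(s(v, w), s(u, w)) = {s(v, w), s(u, w)} := rfl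
  have hsf' : sfin s(s(v, w'), s(u, w')) = {s(v, w'), s(u, w')} := rfl
  rw [hsf, hsf']
  by_cases hww : w = w'
  · subst hww
    rw [if_pos (hPQ.mpr rfl)]
    have : ({s(u, v)} ∪ {s(v, w), s(u, w)} ∪ {s(v, w), s(u, w)} : Finset (Sym2 (Fin n)))
        = {s(u, v), s(v, w), s(u, w)} := by
      ext x; simp; tauto
    rw [this]
    rw [Finset.card_insert_of_notMem (by simp [Sym2.eq_iff]; tauto),
      Finset.card_insert_of_notMem (by simp [Sym2.eq_iff]; tauto), Finset.card_singleton]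
  · rw [if_neg (fun h => hww (hPQ.mp h))]
    have : ({s(u, v)} ∪ {s(v, w), s(u, w)} ∪ {s(v, w'), s(u, w')} : Finset (Sym2 (Fin n)))
        = {s(u, v), s(v, w), s(u, w), s(v, w'), s(u, w')} := by
      ext x; simp; tauto
    rw [this]
    rw [Finset.card_insert_of_notMem (by simp [Sym2.eq_iff]; tauto),
      Finset.card_insert_of_notMem (by simp [Sym2.eq_iff]; tauto),
      Finset.card_insert_of_notMem (by simp [Sym2.eq_iff]; tauto),
      Finset.card_insert_of_notMem (by simp [Sym2.eq_iff]; tauto), Finset.card_singleton]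

/-- `E[Z e (G')²] ≤ ε⁵ * (Z G e)² + ε³ * Z G e` for the
`ε`-sparsification `G'` of `G`. -/
theorem expected_Z_sq_sparsify_le (n : ℕ) (G : Graph n) (ε : ℝ)
    (h0 : 0 < ε) (h1 : ε < 1) (e : Sym2 (Fin n)) (he : ¬ e.IsDiag) :
    ∫ ω, (Z (sparsify G ω) e : ℝ) ^ 2 ∂(edgeMeasure n ε)
      ≤ ε ^ 5 * (Z G e : ℝ) ^ 2 + ε ^ 3 * (Z G e : ℝ) := by
  classical
  haveI : IsProbabilityMeasure (bern ε) := isProb_bern h0.le h1.le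
  haveI : IsProbabilityMeasure (edgeMeasure n ε) := by
    rw [edgeMeasure]; infer_instance
  by_cases hGe : G e = true
  swap
  · have hz : (fun ω : Sym2 (Fin n) → Bool => (Z (sparsify G ω) e : ℝ) ^ 2)
        = fun _ => 0 := by
      ext ω; simp [Z, sparsify, hGe]
    rw [hz]
    simp [Z, hGe]
  · set T := trianglePairs G e with hTdef
    -- pointwise formula for Z of the sparsified graph
    have hZω : ∀ ω : Sym2 (Fin n) → Bool, (Z (sparsify G ω) e : ℝ)
        = indS ω {e} * ∑ P ∈ T, indS ω (sfin P) := by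
      intro ω
      by_cases hωe : ω e = true
      · rw [Z, if_pos (by simp [sparsify, hGe, hωe])]
        rw [Y_eq_card, trianglePairs_sparsify, Finset.card_filter]
        push_cast
        have h1' : indS ω {e} = 1 := by simp [indS, hωe]
        rw [h1', one_mul]
        refine Finset.sum_congr rfl fun P hP => ?_
        simp [indS, mem_sfin]
      · rw [Z, if_neg (by simp [sparsify, hωe])]
        have h1' : indS ω {e} = 0 := by simp [indS, hωe]
        simp [h1']
    have hZsq : ∀ ω : Sym2 (Fin n) → Bool, (Z (sparsify G ω) e : ℝ) ^ 2
        = ∑ P ∈ T, ∑ Q ∈ T, indS ω ({e} ∪ sfin P ∪ sfin Q) := by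
      intro ω
      rw [hZω ω, mul_pow, sq, sq, Finset.sum_mul_sum]
      rw [Finset.mul_sum]
      refine Finset.sum_congr rfl fun P hP => ?_
      rw [Finset.mul_sum]
      refine Finset.sum_congr rfl fun Q hQ => ?_
      have : indS ω {e} * indS ω {e} * (indS ω (sfin P) * indS ω (sfin Q))
          = (indS ω {e} * indS ω (sfin P)) * (indS ω {e} * indS ω (sfin Q)) := by ring
      rw [this, indS_mul, indS_mul, indS_mul]
      congr 1
      ext x; simp [Finset.mem_union]
    have hint : ∫ ω, (Z (sparsify G ω) e : ℝ) ^ 2 ∂(edgeMeasure n ε)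
        = ∑ P ∈ T, ∑ Q ∈ T, ε ^ (if P = Q then 3 else 5) := by
      simp_rw [hZsq]
      rw [integral_finset_sum _ fun P _ => Integrable.of_finite]
      refine Finset.sum_congr rfl fun P hP => ?_
      rw [integral_finset_sum _ fun Q _ => Integrable.of_finite]
      refine Finset.sum_congr rfl fun Q hQ => ?_
      rw [integral_indS n h0.le h1.le, card_key hP hQ]
    rw [hint]
    have hZT : (Z G e : ℝ) = (T.card : ℝ) := by
      rw [Z, if_pos hGe, Y_eq_card]
    rw [hZT]
    have hbound : ∑ P ∈ T, ∑ Q ∈ T, ε ^ (if P = Q then 3 else 5)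
        ≤ ∑ P ∈ T, ∑ Q ∈ T, (ε ^ 5 + if P = Q then ε ^ 3 else 0) := by
      refine Finset.sum_le_sum fun P hP => Finset.sum_le_sum fun Q hQ => ?_
      by_cases h : P = Q
      · simp only [h, if_pos rfl, if_true]
        nlinarith [pow_nonneg h0.le 5, pow_nonneg h0.le 3]
      · simp only [if_neg h]
        linarith
    refine hbound.trans ?_
    have : ∑ P ∈ T, ∑ Q ∈ T, (ε ^ 5 + if P = Q then ε ^ 3 else 0)
        = (T.card : ℝ) ^ 2 * ε ^ 5 + (T.card : ℝ) * ε ^ 3 := by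
      have inner : ∀ P ∈ T, ∑ Q ∈ T, (ε ^ 5 + if P = Q then ε ^ 3 else 0)
          = (T.card : ℝ) * ε ^ 5 + ε ^ 3 := by
        intro P hP
        rw [Finset.sum_add_distrib, Finset.sum_const, Finset.sum_ite_eq, if_pos hP]
        simp [nsmul_eq_mul]
      rw [Finset.sum_congr rfl inner, Finset.sum_add_distrib, Finset.sum_const]
      simp [nsmul_eq_mul]
      ring
    rw [this]
    ring_nf
    nlinarith [pow_nonneg h0.le 5, pow_nonneg h0.le 3, sq_nonneg ((T.card : ℝ))]

end RandomTriangles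
end

section
/- Let G be a finite simple graph on vertex set {1,…,n}, let 0 < ε < 1, let e be an edge of G, and let G' be the ε-sparsification of G. For each edge f of K_n, changing whether e is retained in G' (keeping all other retention choices fixed) changes the value of Σ_{f ∈ K_n} Z_f(G')² by at most Z_e(G)·Y_e(G) + Σ_{{e′,e″}} (2·Y_{e′}(G) + 2·Y_{e″}(G) + 2), where the last sum ranges over all sets {e′, e″} of edges of G such that {e, e′, e″} forms a triangle in G. -/
open MeasureTheory ProbabilityTheory Real Filter

namespace RandomTriangles

section Aux

variable {n : ℕ}

lemma mem_trianglePairs {H : Graph n} {e P} :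
    P ∈ trianglePairs H e ↔ ∃ f g, P = s(f, g) ∧ H f = true ∧ H g = true ∧
      IsTriangleEdges e f g := by
  simp [trianglePairs]

lemma Y_eq (H : Graph n) (e : Sym2 (Fin n)) : Y H e = (trianglePairs H e).card := by
  classical
  rw [Y, Nat.card_eq_fintype_card, Fintype.card_subtype]
  exact congrArg Finset.card (by ext P; simp [mem_trianglePairs])

lemma tri_swap₁₂ {e f g : Sym2 (Fin n)} (h : IsTriangleEdges e f g) :
    IsTriangleEdges f e g := by
  obtain ⟨u, v, w, huv, hvw, huw, he, hf, hg⟩ := h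
  exact ⟨w, v, u, Ne.symm hvw, Ne.symm huv, Ne.symm huw, hf.trans Sym2.eq_swap,
    he.trans Sym2.eq_swap, hg.trans Sym2.eq_swap⟩

lemma tri_swap₂₃ {e f g : Sym2 (Fin n)} (h : IsTriangleEdges e f g) :
    IsTriangleEdges e g f := by
  obtain ⟨u, v, w, huv, hvw, huw, he, hf, hg⟩ := h
  exact ⟨v, u, w, Ne.symm huv, huw, hvw, he.trans Sym2.eq_swap, hg, hf⟩

lemma tri_ne₂₃ {e f g : Sym2 (Fin n)} (h : IsTriangleEdges e f g) : f ≠ g := by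
  obtain ⟨u, v, w, huv, hvw, huw, he, hf, hg⟩ := h
  intro hfg
  rw [hf, hg, Sym2.eq_iff] at hfg
  rcases hfg with ⟨h1, _⟩ | ⟨h1, _⟩
  · exact huv h1.symm
  · exact hvw h1

lemma tri_nondiag {e f g : Sym2 (Fin n)} (h : IsTriangleEdges e f g) :
    ¬ f.IsDiag ∧ ¬ g.IsDiag := by
  obtain ⟨u, v, w, huv, hvw, huw, he, hf, hg⟩ := h
  constructor
  · rw [hf, Sym2.mk_isDiag_iff]; exact hvw
  · rw [hg, Sym2.mk_isDiag_iff]; exact huw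

lemma trianglePairs_mono {H H' : Graph n} (h : ∀ x, H x = true → H' x = true)
    (e : Sym2 (Fin n)) : trianglePairs H e ⊆ trianglePairs H' e := by
  intro P hP
  rw [mem_trianglePairs] at hP ⊢
  obtain ⟨f, g, rfl, hf, hg, ht⟩ := hP
  exact ⟨f, g, rfl, h _ hf, h _ hg, ht⟩

lemma Y_mono {H H' : Graph n} (h : ∀ x, H x = true → H' x = true)
    (e : Sym2 (Fin n)) : Y H e ≤ Y H' e := by
  rw [Y_eq, Y_eq]
  exact Finset.card_le_card (trianglePairs_mono h e)

lemma mem_pair_norm {H : Graph n} {f e P : _} (hP : P ∈ trianglePairs H f)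
    (heP : e ∈ P) : ∃ x, P = s(e, x) ∧ H x = true ∧ IsTriangleEdges f e x := by
  rw [mem_trianglePairs] at hP
  obtain ⟨g, h, rfl, hg, hh, ht⟩ := hP
  rcases Sym2.mem_iff.mp heP with rfl | rfl
  · exact ⟨h, rfl, hh, ht⟩
  · exact ⟨g, Sym2.eq_swap.symm, hg, tri_swap₂₃ ht⟩

open scoped Classical in
lemma card_tp_le (G H : Graph n) (e f : Sym2 (Fin n)) (hGf : G f = true) (hfe : f ≠ e)
    (hHG : ∀ x, H x = true → G x = true) :
    (trianglePairs H f).card ≤ (trianglePairs (removeEdge H e) f).card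
      + ((trianglePairs G e).filter (fun Q => f ∈ Q)).card := by
  classical
  set φ : Sym2 (Sym2 (Fin n)) → Sym2 (Sym2 (Fin n)) :=
    Sym2.lift ⟨fun g h => if g = e then s(f, h) else if h = e then s(f, g) else s(g, h), by
      intro g h
      by_cases hg : g = e <;> by_cases hh : h = e <;> simp [hg, hh, Sym2.eq_swap]⟩
    with hφ
  have hφeval : ∀ x : Sym2 (Fin n), φ s(e, x) = s(f, x) := by
    intro x; simp [hφ]
  have hsplit := Finset.card_filter_add_card_filter_not
    (s := trianglePairs H f) (p := fun P => e ∈ P)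
  rw [← hsplit, add_comm]
  refine add_le_add ?_ ?_
  · apply Finset.card_le_card
    intro P hP
    rw [Finset.mem_filter] at hP
    obtain ⟨hP, heP⟩ := hP
    rw [mem_trianglePairs] at hP ⊢
    obtain ⟨g, h, rfl, hg, hh, ht⟩ := hP
    have hge : g ≠ e := by rintro rfl; exact heP (Sym2.mem_mk_left _ _)
    have hhe : h ≠ e := by rintro rfl; exact heP (Sym2.mem_mk_right _ _)
    refine ⟨g, h, rfl, ?_, ?_, ht⟩
    · rw [removeEdge, if_neg hge]; exact hg
    · rw [removeEdge, if_neg hhe]; exact hh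
  · apply Finset.card_le_card_of_injOn φ
    · intro P hP
      rw [Finset.mem_coe, Finset.mem_filter] at hP
      obtain ⟨hP, heP⟩ := hP
      obtain ⟨x, rfl, hx, htx⟩ := mem_pair_norm hP heP
      rw [hφeval, Finset.mem_coe, Finset.mem_filter]
      refine ⟨mem_trianglePairs.mpr ⟨f, x, rfl, hGf, hHG x hx, tri_swap₁₂ htx⟩, ?_⟩
      exact Sym2.mem_mk_left _ _
    · intro P₁ h₁ P₂ h₂ heq
      rw [Finset.mem_coe, Finset.mem_filter] at h₁ h₂
      obtain ⟨x₁, hP₁, hx₁, ht₁⟩ := mem_pair_norm h₁.1 h₁.2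
      obtain ⟨x₂, hP₂, hx₂, ht₂⟩ := mem_pair_norm h₂.1 h₂.2
      rw [hP₁, hP₂, hφeval, hφeval, Sym2.eq_iff] at heq
      have hx12 : x₁ = x₂ := by
        rcases heq with ⟨_, h⟩ | ⟨h1, h2⟩
        · exact h
        · rw [h2, h1]
      rw [hP₁, hP₂, hx12]

end Aux

/-- changing whether the edge `e` of `G` is retained in the
sparsification (keeping all other retention choices fixed) changes
`∑_{f ∈ K_n} Z f ²` by at most
`Z G e * Y G e + ∑_{{e', e''}} (2 * Y G e' + 2 * Y G e'' + 2)`, the last sum ranging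
over the sets `{e', e''}` of edges of `G` forming a triangle with `e`. -/
theorem sum_Z_sq_lipschitz (n : ℕ) (G : Graph n) (e : Sym2 (Fin n))
    (he : ¬ e.IsDiag) (heG : G e = true) (ω : Sym2 (Fin n) → Bool) :
    |(∑ f ∈ edges n, (Z (sparsify G (Function.update ω e true)) f : ℝ) ^ 2)
        - ∑ f ∈ edges n, (Z (sparsify G (Function.update ω e false)) f : ℝ) ^ 2|
      ≤ (Z G e : ℝ) * (Y G e : ℝ)
        + ∑ P ∈ trianglePairs G e, pairCost (fun f => (Y G f : ℝ)) P := by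
  classical
  set Gp := sparsify G (Function.update ω e true) with hGp
  set Gm := sparsify G (Function.update ω e false) with hGm
  have hpG : ∀ x, Gp x = true → G x = true := by
    intro x hx
    rw [hGp, sparsify, Bool.and_eq_true] at hx
    exact hx.1
  have hpe : Gp e = true := by
    rw [hGp, sparsify, Function.update_self, heG]; rfl
  have hme : Gm e = false := by
    rw [hGm, sparsify, Function.update_self, Bool.and_false]
  have hpm : ∀ x, x ≠ e → Gm x = Gp x := by
    intro x hx
    rw [hGm, hGp, sparsify, sparsify, Function.update_of_ne hx, Function.update_of_ne hx]
  have hmp : ∀ x, Gm x = true → Gp x = true := by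
    intro x hx
    by_cases hxe : x = e
    · subst hxe; rw [hme] at hx; exact absurd hx (by simp)
    · rwa [hpm x hxe] at hx
  have hmG : ∀ x, Gm x = true → G x = true := fun x hx => hpG x (hmp x hx)
  have hGmrm : Gm = removeEdge Gp e := by
    funext x
    by_cases hx : x = e
    · subst hx; rw [removeEdge, if_pos rfl, hme]
    · rw [removeEdge, if_neg hx, hpm x hx]
  have hZle : ∀ f, (Z Gm f : ℝ) ≤ (Z Gp f : ℝ) := by
    intro f
    by_cases hf : f = e
    · subst hf; simp only [Z, hme]
      simp only [Bool.false_eq_true, if_false, Nat.cast_zero]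
      split <;> positivity
    · rw [Z, Z, hpm f hf]
      by_cases hGpf : Gp f = true
      · rw [if_pos hGpf, if_pos hGpf]
        exact_mod_cast Y_mono hmp f
      · rw [if_neg hGpf, if_neg hGpf]
  have hmono : ∑ f ∈ edges n, (Z Gm f : ℝ) ^ 2 ≤ ∑ f ∈ edges n, (Z Gp f : ℝ) ^ 2 :=
    Finset.sum_le_sum fun f _ => pow_le_pow_left₀ (by positivity) (hZle f) 2
  rw [abs_of_nonneg (sub_nonneg.mpr hmono), ← Finset.sum_sub_distrib]
  have hemem : e ∈ edges n := by simp [edges, he]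
  rw [← Finset.sum_erase_add _ _ hemem, add_comm ((Z G e : ℝ) * (Y G e : ℝ)) _]
  refine add_le_add ?_ ?_
  · -- sum over f ≠ e
    have hDle : ∀ f ∈ (edges n).erase e,
        (Z Gp f : ℝ) ^ 2 - (Z Gm f : ℝ) ^ 2 ≤
          2 * (Y G f : ℝ) * (((trianglePairs G e).filter (fun Q => f ∈ Q)).card : ℝ) := by
      intro f hf
      have hfe : f ≠ e := Finset.ne_of_mem_erase hf
      by_cases hGpf : Gp f = true
      · have hGmf : Gm f = true := by rw [hpm f hfe]; exact hGpf
        have hYle : Y Gp f ≤ Y Gm f +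
            ((trianglePairs G e).filter (fun Q => f ∈ Q)).card := by
          have := card_tp_le G Gp e f (hpG f hGpf) hfe hpG
          rw [← hGmrm, ← Y_eq, ← Y_eq] at this
          exact this
        rw [Z, Z, if_pos hGpf, if_pos hGmf]
        have h1 : (Y Gp f : ℝ) - (Y Gm f : ℝ) ≤
            (((trianglePairs G e).filter (fun Q => f ∈ Q)).card : ℝ) := by
          have := (Nat.cast_le (α := ℝ)).mpr hYle
          push_cast at this
          linarith
        have h2 : (Y Gp f : ℝ) ≤ (Y G f : ℝ) := by
          exact_mod_cast Y_mono hpG f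
        have h3 : (Y Gm f : ℝ) ≤ (Y Gp f : ℝ) := by
          exact_mod_cast Y_mono hmp f
        have h4 : (0 : ℝ) ≤ (Y Gm f : ℝ) := Nat.cast_nonneg _
        nlinarith [mul_le_mul h1 (by linarith : (Y Gp f : ℝ) + (Y Gm f : ℝ) ≤ 2 * (Y G f : ℝ))
          (by linarith) (Nat.cast_nonneg (((trianglePairs G e).filter (fun Q => f ∈ Q)).card))]
      · have hGmf : ¬ Gm f = true := by rw [hpm f hfe]; exact hGpf
        rw [Z, Z, if_neg hGpf, if_neg hGmf]
        have hnn : (0:ℝ) ≤ 2 * (Y G f : ℝ) *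
            (((trianglePairs G e).filter (fun Q => f ∈ Q)).card : ℝ) := by positivity
        push_cast
        linarith
    calc ∑ f ∈ (edges n).erase e, ((Z Gp f : ℝ) ^ 2 - (Z Gm f : ℝ) ^ 2)
        ≤ ∑ f ∈ (edges n).erase e,
            2 * (Y G f : ℝ) * (((trianglePairs G e).filter (fun Q => f ∈ Q)).card : ℝ) :=
          Finset.sum_le_sum hDle
      _ = ∑ f ∈ (edges n).erase e, ∑ Q ∈ trianglePairs G e,
            (if f ∈ Q then 2 * (Y G f : ℝ) else 0) := by
          refine Finset.sum_congr rfl fun f _ => ?_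
          rw [Finset.card_filter]
          push_cast
          rw [Finset.mul_sum]
          exact Finset.sum_congr rfl fun Q _ => by split <;> simp
      _ = ∑ Q ∈ trianglePairs G e, ∑ f ∈ (edges n).erase e,
            (if f ∈ Q then 2 * (Y G f : ℝ) else 0) := Finset.sum_comm
      _ ≤ ∑ Q ∈ trianglePairs G e, pairCost (fun f => (Y G f : ℝ)) Q := by
          refine Finset.sum_le_sum fun Q hQ => ?_
          obtain ⟨e1, e2, rfl, hg1, hg2, ht⟩ := mem_trianglePairs.mp hQ
          have hne : e1 ≠ e2 := tri_ne₂₃ ht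
          have hcost : pairCost (fun f => (Y G f : ℝ)) s(e1, e2)
              = 2 * (Y G e1 : ℝ) + 2 * (Y G e2 : ℝ) + 2 := by
            simp [pairCost]
          rw [hcost, ← Finset.sum_filter]
          have hsub : ((edges n).erase e).filter (fun f => f ∈ s(e1, e2)) ⊆ {e1, e2} := by
            intro x hx
            rw [Finset.mem_filter] at hx
            rcases Sym2.mem_iff.mp hx.2 with rfl | rfl
            · exact Finset.mem_insert_self _ _
            · exact Finset.mem_insert_of_mem (Finset.mem_singleton_self _)
          calc ∑ f ∈ ((edges n).erase e).filter (fun f => f ∈ s(e1, e2)), 2 * (Y G f : ℝ)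
              ≤ ∑ f ∈ ({e1, e2} : Finset (Sym2 (Fin n))), 2 * (Y G f : ℝ) :=
                Finset.sum_le_sum_of_subset_of_nonneg hsub (fun _ _ _ => by positivity)
            _ = 2 * (Y G e1 : ℝ) + 2 * (Y G e2 : ℝ) := Finset.sum_pair hne
            _ ≤ 2 * (Y G e1 : ℝ) + 2 * (Y G e2 : ℝ) + 2 := by linarith
  · -- the term f = e
    have hZm : Z Gm e = 0 := by rw [Z, hme]; simp
    have hZp : (Z Gp e : ℝ) ≤ (Y G e : ℝ) := by
      rw [Z, if_pos hpe]
      exact_mod_cast Y_mono hpG e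
    have hZG : Z G e = Y G e := by rw [Z, if_pos heG]
    rw [hZm, hZG]
    have h0 : (0 : ℝ) ≤ (Z Gp e : ℝ) := Nat.cast_nonneg _
    push_cast
    nlinarith

end RandomTriangles
end
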